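/- For transmission T = 0.7, there exists α > 0 such that c₁(α,T)² + erf(√(T/2)·α)² > 1; that is, with two homodyne measurements a CHSH violation S = 2√(c₁² + c₂²) > 2 is still possible at 70% line transmission. -/

import Mathlib

open Real

/-- Error function `erf x = (2/√π)·∫₀ˣ e^{−t²} dt`. -/
noncomputable def erf (x : ℝ) : ℝ :=
  (2 / Real.sqrt π) * ∫ t in (0 : ℝ)..x, Real.exp (-t ^ 2)

/-- Homodyne binning parameter at transmission `T`: `b = π/(2√2·√T·α)`. -/
noncomputable def bT (α T : ℝ) : ℝ := π / (2 * Real.sqrt 2 * (Real.sqrt T * α))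

/-- Homodyne interference coefficient at transmission `T`:
`c₁(α,T) = e^{−(1−T)α²/2}·[(2/√π)·∫_{−b}^{b} e^{−x²} cos(√2 x √T α) dx − e^{−Tα²/2}]`. -/
noncomputable def c1T (α T : ℝ) : ℝ :=
  Real.exp (-(1 - T) * α ^ 2 / 2) *
    ((2 / Real.sqrt π) *
        (∫ x in (-bT α T)..(bT α T),
          Real.exp (-x ^ 2) * Real.cos (Real.sqrt 2 * x * (Real.sqrt T * α)))
      - Real.exp (-T * α ^ 2 / 2))

open MeasureTheory Set Filter Topology in
/-- The Gaussian is integrable. -/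
lemma gauss_int' : Integrable (fun t : ℝ => Real.exp (-t ^ 2)) := by
  have := integrable_exp_neg_mul_sq (one_pos (α := ℝ))
  simpa using this

open MeasureTheory Set Filter Topology in
lemma gauss_tail_integral' {x : ℝ} (hx : 0 < x) :
    ∫ t in Ioi x, t * Real.exp (-t ^ 2) = Real.exp (-x ^ 2) / 2 := by
  have hderiv : ∀ t ∈ Ici x, HasDerivAt (fun t : ℝ => -Real.exp (-t ^ 2) / 2)
      (t * Real.exp (-t ^ 2)) t := by
    intro t _
    have h1 : HasDerivAt (fun t : ℝ => -t ^ 2) (-(2 * t)) t := by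
      simpa using (hasDerivAt_pow 2 t).fun_neg
    have h2 := (h1.exp.fun_neg.div_const 2)
    refine h2.congr_deriv ?_
    ring
  have hlim : Tendsto (fun t : ℝ => -Real.exp (-t ^ 2) / 2) atTop (𝓝 0) := by
    have h1 : Tendsto (fun t : ℝ => -t ^ 2) atTop atBot :=
      tendsto_neg_atTop_atBot.comp (tendsto_pow_atTop two_ne_zero)
    have := (Real.tendsto_exp_atBot.comp h1).neg.div_const 2
    simpa using this
  have := MeasureTheory.integral_Ioi_of_hasDerivAt_of_nonneg' hderiv
    (fun t ht => mul_nonneg (le_of_lt (hx.trans ht)) (Real.exp_pos _).le) hlim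
  rw [this]; ring

open MeasureTheory Set Filter Topology in
lemma gauss_tail_le' {x : ℝ} (hx : 0 < x) :
    ∫ t in Ioi x, Real.exp (-t ^ 2) ≤ Real.exp (-x ^ 2) / (2 * x) := by
  have hmono : ∫ t in Ioi x, Real.exp (-t ^ 2) ≤ ∫ t in Ioi x, x⁻¹ * (t * Real.exp (-t ^ 2)) := by
    apply setIntegral_mono_on gauss_int'.integrableOn
    · have hInt : IntegrableOn (fun t : ℝ => t * Real.exp (-t ^ 2)) (Ioi x) := by
        have hderiv : ∀ t ∈ Ici x, HasDerivAt (fun t : ℝ => -Real.exp (-t ^ 2) / 2)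
            (t * Real.exp (-t ^ 2)) t := by
          intro t _
          have h1 : HasDerivAt (fun t : ℝ => -t ^ 2) (-(2 * t)) t := by
            simpa using (hasDerivAt_pow 2 t).fun_neg
          have h2 := (h1.exp.fun_neg.div_const 2)
          refine h2.congr_deriv ?_; ring
        have hlim : Tendsto (fun t : ℝ => -Real.exp (-t ^ 2) / 2) atTop (𝓝 0) := by
          have h1 : Tendsto (fun t : ℝ => -t ^ 2) atTop atBot :=
            tendsto_neg_atTop_atBot.comp (tendsto_pow_atTop two_ne_zero)
          simpa using (Real.tendsto_exp_atBot.comp h1).neg.div_const 2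
        exact MeasureTheory.integrableOn_Ioi_deriv_of_nonneg' hderiv
          (fun t ht => mul_nonneg (le_of_lt (hx.trans ht)) (Real.exp_pos _).le) hlim
      exact hInt.const_mul _
    · exact measurableSet_Ioi
    · intro t ht
      have hxt : x ≤ t := le_of_lt ht
      have h1 : (1 : ℝ) ≤ x⁻¹ * t := by
        rw [inv_mul_eq_div, le_div_iff₀ hx]; linarith
      nlinarith [Real.exp_pos (-t ^ 2)]
  calc ∫ t in Ioi x, Real.exp (-t ^ 2)
      ≤ ∫ t in Ioi x, x⁻¹ * (t * Real.exp (-t ^ 2)) := hmono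
    _ = x⁻¹ * ∫ t in Ioi x, t * Real.exp (-t ^ 2) := by rw [MeasureTheory.integral_const_mul]
    _ = Real.exp (-x ^ 2) / (2 * x) := by rw [gauss_tail_integral' hx]; field_simp

open MeasureTheory Set Filter Topology in
lemma erf_eq_one_sub' {x : ℝ} (hx : 0 < x) :
    erf x = 1 - (2 / Real.sqrt π) * ∫ t in Ioi x, Real.exp (-t ^ 2) := by
  have hsplit : (∫ t in Ioc 0 x, Real.exp (-t ^ 2)) + ∫ t in Ioi x, Real.exp (-t ^ 2)
      = ∫ t in Ioi (0:ℝ), Real.exp (-t ^ 2) := by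
    rw [← MeasureTheory.setIntegral_union (Ioc_disjoint_Ioi le_rfl) measurableSet_Ioi
      gauss_int'.integrableOn gauss_int'.integrableOn, Ioc_union_Ioi_eq_Ioi hx.le]
  have hgauss : ∫ t in Ioi (0:ℝ), Real.exp (-t ^ 2) = Real.sqrt π / 2 := by
    have := integral_gaussian_Ioi 1
    simpa using this
  have hIoc : (∫ t in (0:ℝ)..x, Real.exp (-t ^ 2)) = ∫ t in Ioc 0 x, Real.exp (-t ^ 2) :=
    intervalIntegral.integral_of_le hx.le
  have hπ : Real.sqrt π ≠ 0 := by positivity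
  rw [erf, hIoc]
  have : (∫ t in Ioc 0 x, Real.exp (-t ^ 2))
      = Real.sqrt π / 2 - ∫ t in Ioi x, Real.exp (-t ^ 2) := by
    rw [← hgauss, ← hsplit]; ring
  rw [this]
  field_simp

open MeasureTheory Set Filter Topology in
set_option maxHeartbeats 4000000 in
/-- At transmission `T = 0.7`, the two-homodyne Bell test still shows a CHSH violation:
there exists `α > 0` with `c₁(α,T)² + erf(√(T/2)·α)² > 1`, i.e. `S = 2√(c₁² + c₂²) > 2`. -/
theorem two_homodyne_violation_at_T_0_7 :
    ∃ α > (0 : ℝ),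
      (c1T α 0.7) ^ 2 + (erf (Real.sqrt (0.7 / 2) * α)) ^ 2 > 1 := by
  refine ⟨6, by norm_num, ?_⟩
  -- basic constants
  set k : ℝ := Real.sqrt 2 * (Real.sqrt 0.7 * 6) with hk_def
  have hk2 : k ^ 2 = 50.4 := by
    have h2 : Real.sqrt 2 ^ 2 = 2 := Real.sq_sqrt (by norm_num)
    have h7 : Real.sqrt 0.7 ^ 2 = 0.7 := Real.sq_sqrt (by norm_num)
    rw [hk_def]; nlinarith
  have hkpos : 0 < k := by
    have : 0 < Real.sqrt 2 := Real.sqrt_pos.mpr (by norm_num)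
    have : 0 < Real.sqrt 0.7 := Real.sqrt_pos.mpr (by norm_num)
    positivity
  have hkub : k ≤ 7.09932 := by nlinarith
  have hklb : (7 : ℝ) ≤ k := by nlinarith
  set b : ℝ := bT 6 0.7 with hb_def
  have hb_eq : b = π / (2 * k) := by
    rw [hb_def, bT, hk_def]; ring_nf
  have hπl : (3.141592 : ℝ) < π := Real.pi_gt_d6
  have hπu : π < 3.15 := by
    have := Real.pi_lt_d2
    linarith
  have hbpos : 0 < b := by
    rw [hb_eq]; positivity
  have hkb : k * b = π / 2 := by
    rw [hb_eq]; field_simp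
  have hb2 : b ^ 2 ≤ 0.04923 := by
    rw [hb_eq, div_pow]
    rw [div_le_iff₀ (by positivity)]
    nlinarith
  -- sqrt pi bounds
  have hsπpos : 0 < Real.sqrt π := Real.sqrt_pos.mpr Real.pi_pos
  have hsπub : Real.sqrt π ≤ 1.775 := by
    nlinarith [Real.sq_sqrt Real.pi_pos.le, Real.sqrt_nonneg π]
  have hsπlb : (1.7724 : ℝ) ≤ Real.sqrt π := by
    nlinarith [Real.sq_sqrt Real.pi_pos.le, Real.sqrt_nonneg π]
  -- the interval integral lower bound
  have hrw : ∀ x : ℝ, Real.sqrt 2 * x * (Real.sqrt 0.7 * 6) = k * x := fun x => by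
    rw [hk_def]; ring
  set I : ℝ := ∫ x in (-b)..b, Real.exp (-x ^ 2) * Real.cos (Real.sqrt 2 * x * (Real.sqrt 0.7 * 6))
    with hI_def
  have hI_eq : I = ∫ x in (-b)..b, Real.exp (-x ^ 2) * Real.cos (k * x) := by
    rw [hI_def]
    congr 1
    ext x
    rw [hrw x]
  clear_value k
  have hcont1 : Continuous fun x : ℝ => Real.exp (-b ^ 2) * Real.cos (k * x) := by fun_prop
  have hcont2 : Continuous fun x : ℝ => Real.exp (-x ^ 2) * Real.cos (k * x) := by fun_prop
  have hmono : (∫ x in (-b)..b, Real.exp (-b ^ 2) * Real.cos (k * x))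
      ≤ ∫ x in (-b)..b, Real.exp (-x ^ 2) * Real.cos (k * x) := by
    apply intervalIntegral.integral_mono_on (by linarith)
      (hcont1.intervalIntegrable _ _) (hcont2.intervalIntegrable _ _)
    intro x hx
    have hx1 : -b ≤ x := hx.1
    have hx2 : x ≤ b := hx.2
    have hcos : 0 ≤ Real.cos (k * x) := by
      apply Real.cos_nonneg_of_mem_Icc
      constructor
      · rw [← hkb] at *; nlinarith
      · rw [← hkb] at *; nlinarith
    have hexp : Real.exp (-b ^ 2) ≤ Real.exp (-x ^ 2) := by
      apply Real.exp_le_exp.mpr; nlinarith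
    exact mul_le_mul_of_nonneg_right hexp hcos
  clear_value b I
  have hIconst : (∫ x in (-b)..b, Real.exp (-b ^ 2) * Real.cos (k * x))
      = Real.exp (-b ^ 2) * (k⁻¹ * 2) := by
    rw [intervalIntegral.integral_const_mul]
    congr 1
    rw [intervalIntegral.integral_comp_mul_left (fun x => Real.cos x) hkpos.ne']
    rw [integral_cos, mul_neg, hkb, Real.sin_neg, Real.sin_pi_div_two]
    rw [smul_eq_mul]
    ring
  have hexpb : (0.9507 : ℝ) ≤ Real.exp (-b ^ 2) := by
    have := Real.add_one_le_exp (-b ^ 2)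
    linarith
  have hIlb : (0.2678 : ℝ) ≤ I := by
    rw [hI_eq]
    refine le_trans ?_ hmono
    rw [hIconst]
    have h2k : (0.28171 : ℝ) ≤ k⁻¹ * 2 := by
      rw [inv_mul_eq_div, le_div_iff₀ hkpos]; nlinarith
    nlinarith [Real.exp_pos (-b ^ 2)]
  -- e^{-12.6} upper bound
  have he12 : Real.exp (-12.6) ≤ 0.000519 := by
    have h1 : (2.575 : ℝ) ^ 8 ≤ Real.exp 1.575 ^ 8 := by
      apply pow_le_pow_left₀ (by norm_num)
      have := Real.add_one_le_exp (1.575 : ℝ)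
      linarith
    have h2 : Real.exp 1.575 ^ 8 = Real.exp 12.6 := by
      rw [← Real.exp_nat_mul]; norm_num
    have h3 : (1930 : ℝ) ≤ Real.exp 12.6 := by nlinarith
    rw [Real.exp_neg]
    rw [inv_le_comm₀ (by linarith) (by norm_num)]
    linarith
  -- e^{-1.8} upper bound
  have he18 : Real.exp (-1.8) ≤ 0.19725 := by
    have h1 : (1.225 : ℝ) ^ 8 ≤ Real.exp 0.225 ^ 8 := by
      apply pow_le_pow_left₀ (by norm_num)
      have := Real.add_one_le_exp (0.225 : ℝ)
      linarith
    have h2 : Real.exp 0.225 ^ 8 = Real.exp 1.8 := by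
      rw [← Real.exp_nat_mul]; norm_num
    have h3 : (5.0709 : ℝ) ≤ Real.exp 1.8 := by nlinarith
    rw [Real.exp_neg]
    rw [inv_le_comm₀ (by linarith) (by norm_num)]
    linarith
  -- c1 lower bound
  have hc1_eq : c1T 6 0.7 = Real.exp (-5.4) * ((2 / Real.sqrt π) * I - Real.exp (-12.6)) := by
    rw [c1T, ← hb_def, ← hI_def]
    norm_num
  have hbracket : (0.3 : ℝ) ≤ (2 / Real.sqrt π) * I - Real.exp (-12.6) := by
    have h1 : (1.1267 : ℝ) ≤ 2 / Real.sqrt π := by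
      rw [le_div_iff₀ hsπpos]; nlinarith
    nlinarith
  have hc1sq : Real.exp (-10.8) * 0.09 ≤ (c1T 6 0.7) ^ 2 := by
    have hX : (0.09 : ℝ) ≤ ((2 / Real.sqrt π) * I - Real.exp (-12.6)) ^ 2 := by nlinarith
    have he : ((-5.4 : ℝ)) + (-5.4) = -10.8 := by norm_num
    rw [hc1_eq, mul_pow, sq (Real.exp (-5.4)), ← Real.exp_add, he]
    exact mul_le_mul_of_nonneg_left hX (Real.exp_pos _).le
  -- erf part
  set x : ℝ := Real.sqrt (0.7 / 2) * 6 with hx_def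
  have hx2 : x ^ 2 = 12.6 := by
    have := Real.sq_sqrt (show (0:ℝ) ≤ 0.7/2 by norm_num)
    rw [hx_def]; nlinarith
  have hxlb : (3.5496 : ℝ) ≤ x := by
    nlinarith [Real.sqrt_nonneg (0.7/2 : ℝ), Real.sq_sqrt (show (0:ℝ) ≤ 0.7/2 by norm_num)]
  have hxpos : 0 < x := by linarith
  clear_value x
  set G : ℝ := ∫ t in Ioi x, Real.exp (-t ^ 2) with hG_def
  have hGnonneg : 0 ≤ G := by
    rw [hG_def]
    exact setIntegral_nonneg measurableSet_Ioi (fun t _ => (Real.exp_pos _).le)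
  have hGub : G ≤ Real.exp (-12.6) / (2 * x) := by
    have := gauss_tail_le' hxpos
    rw [hx2] at this
    exact this
  clear_value G
  have herf : erf x = 1 - (2 / Real.sqrt π) * G := by
    rw [hG_def]; exact erf_eq_one_sub' hxpos
  set u : ℝ := (2 / Real.sqrt π) * G with hu_def
  have hunonneg : 0 ≤ u := by rw [hu_def]; positivity
  clear_value u
  have huub : 2 * u ≤ Real.exp (-10.8) * 0.064 := by
    have h1 : u ≤ (2 / Real.sqrt π) * (Real.exp (-12.6) / (2 * x)) := by
      rw [hu_def]
      exact mul_le_mul_of_nonneg_left hGub (by positivity)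
    have h2 : (2 / Real.sqrt π) * (Real.exp (-12.6) / (2 * x))
        ≤ Real.exp (-12.6) * 0.159 := by
      rw [div_mul_div_comm]
      rw [div_le_iff₀ (by positivity)]
      have he : (0 : ℝ) < Real.exp (-12.6) := Real.exp_pos _
      have hsx : (6.29 : ℝ) ≤ Real.sqrt π * x := by nlinarith
      nlinarith
    have h3 : Real.exp (-12.6) = Real.exp (-10.8) * Real.exp (-1.8) := by
      rw [← Real.exp_add]; norm_num
    have h4 : Real.exp (-12.6) * 0.159 ≤ Real.exp (-10.8) * 0.032 := by
      rw [h3, mul_assoc]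
      apply mul_le_mul_of_nonneg_left _ (Real.exp_pos _).le
      nlinarith [Real.exp_pos (-1.8 : ℝ)]
    linarith
  -- finish
  clear hmono hIconst hI_def hI_eq hcont1 hcont2 hrw hG_def hGnonneg hGub hk_def hb_def hb_eq hkb
  clear hx_def hu_def hc1_eq hbracket hIlb hexpb he12 he18 hk2 hkpos hkub hklb hbpos hb2
  clear hπl hπu hsπpos hsπub hsπlb hx2 hxlb hxpos G b k I
  have hsq : (1 - u) ^ 2 ≥ 1 - 2 * u := by
    calc (1 - u) ^ 2 = 1 - 2 * u + u ^ 2 := by ring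
      _ ≥ 1 - 2 * u := by linarith [sq_nonneg u]
  have hpos : (0:ℝ) < Real.exp (-10.8) := Real.exp_pos _
  rw [herf]
  linarith [hc1sq, huub, hsq, hpos]
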